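/- Let f : ℝ^d → ℝ be differentiable with L₂-Lipschitz gradient. Let ξ₁, ξ₂ be real random variables independent of the pair (e, r) with E[ξ₁²] ≤ Δ̃² and E[ξ₂²] ≤ Δ̃², and define g̃(x, ξ, e, r) := d (f(x + γ r e) + ξ₁ − f(x − γ r e) − ξ₂) K(r) e/(2γ). Then for every x ∈ ℝ^d, E[‖g̃(x, ξ, e, r)‖₂²] ≤ κ (6 d ‖∇f(x)‖₂² + (3/4) d² L₂² γ²) + 2 κ d² Δ̃²/γ². -/

import Mathlib

open MeasureTheory ProbabilityTheory
open scoped ENNReal RealInnerProductSpace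

/-- Descent lemma: quadratic upper bound for functions with Lipschitz gradient. -/
lemma descent_lemma {d : ℕ} (f : EuclideanSpace ℝ (Fin d) → ℝ) (L : ℝ)
    (hf : Differentiable ℝ f)
    (hlip : ∀ x y : EuclideanSpace ℝ (Fin d), ‖gradient f x - gradient f y‖ ≤ L * ‖x - y‖)
    (x h : EuclideanSpace ℝ (Fin d)) :
    |f (x + h) - f x - ⟪gradient f x, h⟫| ≤ L / 2 * ‖h‖ ^ 2 := by
  by_cases hh : h = 0
  · simp [hh]
  have hL : 0 ≤ L := by
    have h1 := hlip x (x + h)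
    have h2 : ‖x - (x + h)‖ = ‖h‖ := by rw [show x - (x + h) = -h by module, norm_neg]
    rw [h2] at h1
    have h3 : (0:ℝ) ≤ L * ‖h‖ := le_trans (norm_nonneg _) h1
    have h4 : (0:ℝ) < ‖h‖ := norm_pos_iff.2 hh
    nlinarith
  -- derivative of t ↦ f (x + t • h)
  have hder : ∀ t : ℝ, HasDerivAt (fun t : ℝ => f (x + t • h))
      ⟪gradient f (x + t • h), h⟫ t := by
    intro t
    have h1 : HasDerivAt (fun t : ℝ => x + t • h) h t := by
      simpa using ((hasDerivAt_id t).smul_const h).const_add x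
    have h2 := ((hf (x + t • h)).hasGradientAt.hasFDerivAt).comp_hasDerivAt t h1
    simpa [InnerProductSpace.toDual_apply_apply, Function.comp_def] using h2
  set g' : ℝ → ℝ := fun t => ⟪gradient f (x + t • h), h⟫ - ⟪gradient f x, h⟫ with hg'
  have hgd : ∀ t : ℝ, HasDerivAt (fun t : ℝ => f (x + t • h) - t * ⟪gradient f x, h⟫) (g' t) t := by
    intro t
    have := (hder t).sub ((hasDerivAt_id t).mul_const (⟪gradient f x, h⟫ : ℝ))
    simpa [id_def, hg', Pi.sub_def] using this
  have hcontgrad : Continuous fun t : ℝ => gradient f (x + t • h) := by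
    rcases le_or_gt L 0 with hL0 | hL0
    · have : ∀ s t : ℝ, gradient f (x + s • h) = gradient f (x + t • h) := by
        intro s t
        have := hlip (x + s • h) (x + t • h)
        have hnn : (0:ℝ) ≤ ‖gradient f (x + s • h) - gradient f (x + t • h)‖ := norm_nonneg _
        have hle : L * ‖(x + s • h) - (x + t • h)‖ ≤ 0 :=
          mul_nonpos_iff.2 (Or.inr ⟨hL0, norm_nonneg _⟩)
        have : ‖gradient f (x + s • h) - gradient f (x + t • h)‖ = 0 := le_antisymm (this.trans hle) hnn
        rwa [norm_sub_eq_zero_iff] at this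
      simpa [this] using continuous_const.congr fun t => (this 0 t)
    · apply (LipschitzWith.of_dist_le_mul (K := ⟨L * ‖h‖, by positivity⟩)
        (f := fun t : ℝ => gradient f (x + t • h)) ?_).continuous
      intro s t
      have := hlip (x + s • h) (x + t • h)
      simp only [dist_eq_norm]
      calc ‖gradient f (x + s • h) - gradient f (x + t • h)‖
          ≤ L * ‖(x + s • h) - (x + t • h)‖ := this
        _ = L * ‖h‖ * |s - t| := by
            rw [show (x + s • h) - (x + t • h) = (s - t) • h by module, norm_smul]
            simp [Real.norm_eq_abs]; ring
  have hcont : Continuous g' := by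
    exact (hcontgrad.inner continuous_const).sub continuous_const
  have hfund : ∫ t in (0:ℝ)..1, g' t =
      (f (x + (1:ℝ) • h) - (1:ℝ) * ⟪gradient f x, h⟫) - (f (x + (0:ℝ) • h) - (0:ℝ) * ⟪gradient f x, h⟫) := by
    exact intervalIntegral.integral_eq_sub_of_hasDerivAt (fun t _ => hgd t)
      (hcont.intervalIntegrable 0 1)
  have heq : f (x + h) - f x - ⟪gradient f x, h⟫ = ∫ t in (0:ℝ)..1, g' t := by
    rw [hfund]
    simp only [one_smul, zero_smul, add_zero, one_mul, zero_mul, sub_zero]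
    ring
  rw [heq]
  have hbound : ∀ t ∈ Set.Icc (0:ℝ) 1, ‖g' t‖ ≤ (L * ‖h‖ ^ 2) * t := by
    intro t ht
    have h1 : g' t = ⟪gradient f (x + t • h) - gradient f x, h⟫ := by
      rw [hg']; rw [inner_sub_left]
    rw [h1, Real.norm_eq_abs]
    calc |⟪gradient f (x + t • h) - gradient f x, h⟫|
        ≤ ‖gradient f (x + t • h) - gradient f x‖ * ‖h‖ := abs_real_inner_le_norm _ _
      _ ≤ (L * ‖(x + t • h) - x‖) * ‖h‖ := by
          apply mul_le_mul_of_nonneg_right (hlip _ _) (norm_nonneg _)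
      _ = (L * ‖h‖ ^ 2) * t := by
          rw [show (x + t • h) - x = t • h by module, norm_smul]
          simp [Real.norm_eq_abs, abs_of_nonneg ht.1]; ring
  have hval : ∫ t in (0:ℝ)..1, (L * ‖h‖ ^ 2) * t = L / 2 * ‖h‖ ^ 2 := by
    rw [intervalIntegral.integral_const_mul, integral_id]; ring
  calc |∫ t in (0:ℝ)..1, g' t| = ‖∫ t in (0:ℝ)..1, g' t‖ := (Real.norm_eq_abs _).symm
    _ ≤ |∫ t in (0:ℝ)..1, (L * ‖h‖ ^ 2) * t| := by
        apply intervalIntegral.norm_integral_le_abs_of_norm_le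
        · filter_upwards [MeasureTheory.ae_restrict_mem measurableSet_uIoc] with t ht
          rw [Set.uIoc_of_le zero_le_one] at ht
          exact hbound t ⟨le_of_lt ht.1, ht.2⟩
        · exact (continuous_const.mul continuous_id).intervalIntegrable 0 1
    _ = L / 2 * ‖h‖ ^ 2 := by
        rw [hval, abs_of_nonneg (mul_nonneg (by linarith) (by positivity))]


lemma sum_inner_single_sq {d : ℕ} (y : EuclideanSpace ℝ (Fin d)) :
    ∑ i, (⟪EuclideanSpace.single i (1:ℝ), y⟫ : ℝ) ^ 2 = ‖y‖ ^ 2 := by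
  have h1 : ‖y‖ ^ 2 = ∑ i, ‖y i‖ ^ 2 := by
    rw [EuclideanSpace.norm_eq, Real.sq_sqrt (by positivity)]
  rw [h1]
  refine Finset.sum_congr rfl fun i _ => ?_
  rw [EuclideanSpace.inner_single_left]
  simp [Real.norm_eq_abs, sq_abs]

lemma sphere_inner_sq {Ω : Type*} {m0 : MeasurableSpace Ω} (P : Measure Ω)
    [IsProbabilityMeasure P] {d : ℕ} (hd : 0 < d) (e : Ω → EuclideanSpace ℝ (Fin d))
    (he_meas : Measurable e) (he_norm : ∀ ω, ‖e ω‖ = 1)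
    (he_unif : ∀ O : EuclideanSpace ℝ (Fin d) ≃ₗᵢ[ℝ] EuclideanSpace ℝ (Fin d),
      Measure.map (fun ω => O (e ω)) P = Measure.map e P)
    (v : EuclideanSpace ℝ (Fin d)) :
    ∫ ω, (⟪v, e ω⟫ : ℝ) ^ 2 ∂P = ‖v‖ ^ 2 / d := by
  -- integral is invariant under isometries applied to e
  have map_eq : ∀ (O : EuclideanSpace ℝ (Fin d) ≃ₗᵢ[ℝ] EuclideanSpace ℝ (Fin d))
      (u : EuclideanSpace ℝ (Fin d)),
      ∫ ω, (⟪u, O (e ω)⟫ : ℝ) ^ 2 ∂P = ∫ ω, (⟪u, e ω⟫ : ℝ) ^ 2 ∂P := by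
    intro O u
    have hφ : Continuous fun y : EuclideanSpace ℝ (Fin d) => (⟪u, y⟫ : ℝ) ^ 2 :=
      (continuous_const.inner continuous_id).pow 2
    have h1 : ∫ ω, (⟪u, O (e ω)⟫ : ℝ) ^ 2 ∂P
        = ∫ y, (⟪u, y⟫ : ℝ) ^ 2 ∂(Measure.map (fun ω => O (e ω)) P) := by
      rw [integral_map (by exact (O.continuous.measurable.comp he_meas).aemeasurable)
        hφ.aestronglyMeasurable]
    rw [h1, he_unif O, integral_map he_meas.aemeasurable hφ.aestronglyMeasurable]
  -- all unit vectors give the same integral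
  have step1 : ∀ u w : EuclideanSpace ℝ (Fin d), ‖u‖ = ‖w‖ →
      ∫ ω, (⟪u, e ω⟫ : ℝ) ^ 2 ∂P = ∫ ω, (⟪w, e ω⟫ : ℝ) ^ 2 ∂P := by
    intro u w huw
    set O := Submodule.reflection (ℝ ∙ (u - w))ᗮ with hO
    have hOu : O u = w := Submodule.reflection_sub huw
    have : ∫ ω, (⟪w, e ω⟫ : ℝ) ^ 2 ∂P = ∫ ω, (⟪u, O.symm (e ω)⟫ : ℝ) ^ 2 ∂P := by
      refine integral_congr_ae (Filter.Eventually.of_forall fun ω => ?_)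
      show (⟪w, e ω⟫ : ℝ) ^ 2 = (⟪u, O.symm (e ω)⟫ : ℝ) ^ 2
      rw [← hOu, ← O.symm.inner_map_map (O u) (e ω), O.symm_apply_apply]
    rw [this, map_eq O.symm u]
  classical
  let i₀ : Fin d := ⟨0, hd⟩
  have hsingle_norm : ∀ i : Fin d, ‖(EuclideanSpace.single i (1:ℝ))‖ = 1 := by
    intro i; rw [EuclideanSpace.norm_single]; norm_num
  set c := ∫ ω, (⟪EuclideanSpace.single i₀ (1:ℝ), e ω⟫ : ℝ) ^ 2 ∂P with hc
  have hint : ∀ u : EuclideanSpace ℝ (Fin d),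
      Integrable (fun ω => (⟪u, e ω⟫ : ℝ) ^ 2) P := by
    intro u
    refine (integrable_const (‖u‖ ^ 2)).mono'
      (((measurable_const.inner he_meas).pow_const 2).aestronglyMeasurable) ?_
    refine Filter.Eventually.of_forall fun ω => ?_
    rw [Real.norm_eq_abs, abs_of_nonneg (sq_nonneg _)]
    calc (⟪u, e ω⟫ : ℝ) ^ 2 ≤ (‖u‖ * ‖e ω‖) ^ 2 := by
          rw [← sq_abs]
          exact pow_le_pow_left₀ (abs_nonneg _) (abs_real_inner_le_norm _ _) 2
      _ = ‖u‖ ^ 2 := by rw [he_norm ω]; ring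
  have hdc : (d : ℝ) * c = 1 := by
    have h2 : ∫ ω, (∑ i, (⟪EuclideanSpace.single i (1:ℝ), e ω⟫ : ℝ) ^ 2) ∂P
        = ∑ i, ∫ ω, (⟪EuclideanSpace.single i (1:ℝ), e ω⟫ : ℝ) ^ 2 ∂P :=
      integral_finset_sum _ fun i _ => hint _
    have h3 : ∫ ω, (∑ i, (⟪EuclideanSpace.single i (1:ℝ), e ω⟫ : ℝ) ^ 2) ∂P = 1 := by
      rw [integral_congr_ae (Filter.Eventually.of_forall fun ω => by
        rw [sum_inner_single_sq, he_norm ω, one_pow])]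
      simp
    have h4 : ∀ i : Fin d, ∫ ω, (⟪EuclideanSpace.single i (1:ℝ), e ω⟫ : ℝ) ^ 2 ∂P = c :=
      fun i => step1 _ _ (by rw [hsingle_norm i, hsingle_norm i₀])
    rw [h2] at h3
    rw [Finset.sum_congr rfl (fun i _ => h4 i), Finset.sum_const, Finset.card_univ,
      Fintype.card_fin, nsmul_eq_mul] at h3
    exact h3
  have hd0 : (d : ℝ) ≠ 0 := Nat.cast_ne_zero.2 hd.ne'
  by_cases hv : v = 0
  · simp [hv, inner_zero_left]
  · have hvn : (0:ℝ) < ‖v‖ := norm_pos_iff.2 hv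
    have hu : ‖(‖v‖⁻¹ • v)‖ = 1 := by
      rw [norm_smul, Real.norm_eq_abs, abs_of_nonneg (by positivity)]
      field_simp
    have h5 : ∀ ω, (⟪v, e ω⟫ : ℝ) ^ 2 = ‖v‖ ^ 2 * (⟪(‖v‖⁻¹ • v), e ω⟫ : ℝ) ^ 2 := by
      intro ω
      rw [real_inner_smul_left]
      field_simp
    have h6 : ∫ ω, (⟪(‖v‖⁻¹ • v : EuclideanSpace ℝ (Fin d)), e ω⟫ : ℝ) ^ 2 ∂P
        = ∫ ω, (⟪EuclideanSpace.single i₀ (1:ℝ), e ω⟫ : ℝ) ^ 2 ∂P :=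
      step1 _ _ (hu.trans (hsingle_norm i₀).symm)
    rw [integral_congr_ae (Filter.Eventually.of_forall h5), integral_const_mul, h6, ← hc]
    have hcv : c = 1 / d := by field_simp at hdc ⊢; linarith
    rw [hcv]; field_simp

lemma young_combine (F A B x1 x2 : ℝ) (h1 : (F - A) ^ 2 ≤ B ^ 2) :
    (F + x1 - x2) ^ 2 ≤ 6 * A ^ 2 + 3 * B ^ 2 + 4 * x1 ^ 2 + 4 * x2 ^ 2 := by
  nlinarith [sq_nonneg (F - 3 * A), sq_nonneg (F - x1 + x2), sq_nonneg (x1 + x2)]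

lemma pointwise_alg (dd γ k s a F x1 x2 L : ℝ) (hγ : γ ≠ 0)
    (h1 : (F - 2 * (γ * s) * a) ^ 2 ≤ (L * (γ ^ 2 * s ^ 2)) ^ 2) :
    (dd / (2 * γ) * (F + x1 - x2) * k) ^ 2 ≤
      6 * dd ^ 2 * (a ^ 2 * (s ^ 2 * k ^ 2)) +
      3 / 4 * dd ^ 2 * L ^ 2 * γ ^ 2 * (s ^ 4 * k ^ 2) +
      dd ^ 2 / γ ^ 2 * (x1 ^ 2 * k ^ 2) +
      dd ^ 2 / γ ^ 2 * (x2 ^ 2 * k ^ 2) := by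
  have hF2 := young_combine F (2 * (γ * s) * a) (L * (γ ^ 2 * s ^ 2)) x1 x2 h1
  calc (dd / (2 * γ) * (F + x1 - x2) * k) ^ 2
      = dd ^ 2 * k ^ 2 / (4 * γ ^ 2) * (F + x1 - x2) ^ 2 := by
        field_simp; ring
    _ ≤ dd ^ 2 * k ^ 2 / (4 * γ ^ 2) *
        (6 * (2 * (γ * s) * a) ^ 2 + 3 * (L * (γ ^ 2 * s ^ 2)) ^ 2
          + 4 * x1 ^ 2 + 4 * x2 ^ 2) :=
        mul_le_mul_of_nonneg_left hF2 (by positivity)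
    _ = _ := by field_simp; ring

set_option maxHeartbeats 1000000 in
/-- Second-moment bound for the one-point kernel-based gradient approximation
of an `L₂`-smooth function, where the oracle is corrupted by additive adversarial stochastic
noises `ξ₁, ξ₂` independent of `(e, r)` with second moments at most `Δ̃²`:
`E[‖g̃(x,ξ,e,r)‖²] ≤ κ(6d‖∇f(x)‖² + (3/4)d²L₂²γ²) + 2κd²Δ̃²/γ²`, where `κ = E[K(r)²]`. -/
theorem kernel_second_moment_stochastic_noise
    {Ω : Type*} {m0 : MeasurableSpace Ω} (P : Measure Ω) [IsProbabilityMeasure P]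
    {d : ℕ} (f : EuclideanSpace ℝ (Fin d) → ℝ) (L₂ : ℝ)
    (hf : Differentiable ℝ f)
    (hlip : ∀ x y : EuclideanSpace ℝ (Fin d), ‖gradient f x - gradient f y‖ ≤ L₂ * ‖x - y‖)
    (γ : ℝ) (hγ : 0 < γ) (Δt : ℝ)
    (e : Ω → EuclideanSpace ℝ (Fin d)) (r : Ω → ℝ) (ξ₁ ξ₂ : Ω → ℝ) (K : ℝ → ℝ)
    (he_meas : Measurable e) (he_norm : ∀ ω, ‖e ω‖ = 1)
    (he_unif : ∀ O : EuclideanSpace ℝ (Fin d) ≃ₗᵢ[ℝ] EuclideanSpace ℝ (Fin d),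
      Measure.map (fun ω => O (e ω)) P = Measure.map e P)
    (hr_meas : Measurable r)
    (hr_unif : Measure.map r P = (2⁻¹ : ℝ≥0∞) • volume.restrict (Set.Icc (-1 : ℝ) 1))
    (hindep : IndepFun e r P)
    (hξ₁_meas : Measurable ξ₁) (hξ₂_meas : Measurable ξ₂)
    (hξ₁_L2 : MemLp ξ₁ 2 P) (hξ₂_L2 : MemLp ξ₂ 2 P)
    (hξ₁_mom : ∫ ω, (ξ₁ ω) ^ 2 ∂P ≤ Δt ^ 2) (hξ₂_mom : ∫ ω, (ξ₂ ω) ^ 2 ∂P ≤ Δt ^ 2)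
    (hξ_indep : IndepFun (fun ω => (ξ₁ ω, ξ₂ ω)) (fun ω => (e ω, r ω)) P)
    (hK_meas : Measurable K)
    (hK2_int : Integrable (fun ω => (K (r ω)) ^ 2) P)
    (x : EuclideanSpace ℝ (Fin d)) :
    ∫ ω, ‖((d : ℝ) / (2 * γ) *
          ((f (x + (γ * r ω) • e ω) + ξ₁ ω)
            - (f (x - (γ * r ω) • e ω) + ξ₂ ω)) * K (r ω)) • e ω‖ ^ 2 ∂P
      ≤ (∫ ω, (K (r ω)) ^ 2 ∂P) *
          (6 * d * ‖gradient f x‖ ^ 2 + 3 / 4 * (d : ℝ) ^ 2 * L₂ ^ 2 * γ ^ 2)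
        + 2 * (∫ ω, (K (r ω)) ^ 2 ∂P) * (d : ℝ) ^ 2 * Δt ^ 2 / γ ^ 2 := by

  classical
  have hγ' : γ ≠ 0 := ne_of_gt hγ
  have hΩ : Nonempty Ω := by
    by_contra h
    rw [not_nonempty_iff] at h
    have h1 : P Set.univ = 1 := measure_univ
    rw [Set.univ_eq_empty_iff.mpr h] at h1
    simp at h1
  obtain ⟨ω₀⟩ := hΩ
  have hd : 0 < d := by
    rcases Nat.eq_zero_or_pos d with h0 | h0
    · exfalso
      have h1 := he_norm ω₀
      rw [EuclideanSpace.norm_eq] at h1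
      subst h0
      simp at h1
    · exact h0
  have hd0 : (d : ℝ) ≠ 0 := Nat.cast_ne_zero.2 hd.ne'
  have hL : 0 ≤ L₂ := by
    set u : EuclideanSpace ℝ (Fin d) := EuclideanSpace.single ⟨0, hd⟩ (1:ℝ) with hu
    have hun : ‖u‖ = 1 := by rw [hu, EuclideanSpace.norm_single]; norm_num
    have h1 := hlip x (x + u)
    have h2 : ‖x - (x + u)‖ = 1 := by
      rw [show x - (x + u) = -u by module, norm_neg, hun]
    rw [h2, mul_one] at h1
    exact le_trans (norm_nonneg _) h1
  -- r is a.s. in [-1, 1]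
  have hr_ae : ∀ᵐ ω ∂P, |r ω| ≤ 1 := by
    have hs : MeasurableSet (Set.Icc (-1:ℝ) 1) := measurableSet_Icc
    have h0 : P (r ⁻¹' (Set.Icc (-1:ℝ) 1)ᶜ) = 0 := by
      have hmap : Measure.map r P (Set.Icc (-1:ℝ) 1)ᶜ = P (r ⁻¹' (Set.Icc (-1:ℝ) 1)ᶜ) :=
        Measure.map_apply hr_meas hs.compl
      rw [← hmap, hr_unif]
      simp [Measure.restrict_apply hs.compl, Set.compl_inter_self]
    have hmem : ∀ᵐ ω ∂P, r ω ∈ Set.Icc (-1:ℝ) 1 := by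
      rw [ae_iff]
      convert h0 using 2
      rfl
    filter_upwards [hmem] with ω hω
    rw [abs_le]; exact ⟨hω.1, hω.2⟩
  set g := gradient f x with hgdef
  set κ := ∫ ω, (K (r ω)) ^ 2 ∂P with hκdef
  have hκ : 0 ≤ κ := integral_nonneg fun ω => sq_nonneg _
  -- measurability
  have mK2 : Measurable fun ω => (K (r ω)) ^ 2 := (hK_meas.comp hr_meas).pow_const 2
  have ma : Measurable fun ω => (⟪g, e ω⟫ : ℝ) := measurable_const.inner he_meas
  have ma2 : Measurable fun ω => (⟪g, e ω⟫ : ℝ) ^ 2 := ma.pow_const 2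
  have habound : ∀ ω, (⟪g, e ω⟫ : ℝ) ^ 2 ≤ ‖g‖ ^ 2 := by
    intro ω
    calc (⟪g, e ω⟫ : ℝ) ^ 2 ≤ (‖g‖ * ‖e ω‖) ^ 2 := by
          rw [← sq_abs]
          exact pow_le_pow_left₀ (abs_nonneg _) (abs_real_inner_le_norm _ _) 2
      _ = ‖g‖ ^ 2 := by rw [he_norm ω]; ring
  -- integrability of components
  have intJ : Integrable (fun ω => (r ω) ^ 2 * (K (r ω)) ^ 2) P := by
    refine hK2_int.mono' ((hr_meas.pow_const 2).mul mK2).aestronglyMeasurable ?_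
    filter_upwards [hr_ae] with ω hω
    rw [Real.norm_eq_abs, abs_of_nonneg (by positivity)]
    have h1 : (r ω) ^ 2 ≤ 1 := by nlinarith [abs_nonneg (r ω), sq_abs (r ω)]
    nlinarith [sq_nonneg (K (r ω))]
  have intJ4 : Integrable (fun ω => (r ω) ^ 4 * (K (r ω)) ^ 2) P := by
    refine hK2_int.mono' ((hr_meas.pow_const 4).mul mK2).aestronglyMeasurable ?_
    filter_upwards [hr_ae] with ω hω
    rw [Real.norm_eq_abs, abs_of_nonneg (by positivity)]
    have h0 : (r ω) ^ 2 ≤ 1 := by nlinarith [abs_nonneg (r ω), sq_abs (r ω)]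
    have h1 : (r ω) ^ 4 ≤ 1 := by nlinarith [sq_nonneg (r ω), h0]
    nlinarith [sq_nonneg (K (r ω))]
  have int_aJ : Integrable (fun ω => (⟪g, e ω⟫ : ℝ) ^ 2 * ((r ω) ^ 2 * (K (r ω)) ^ 2)) P := by
    refine (hK2_int.const_mul (‖g‖ ^ 2)).mono'
      (ma2.mul ((hr_meas.pow_const 2).mul mK2)).aestronglyMeasurable ?_
    filter_upwards [hr_ae] with ω hω
    rw [Real.norm_eq_abs, abs_of_nonneg (by positivity)]
    have h1 : (r ω) ^ 2 ≤ 1 := by nlinarith [abs_nonneg (r ω), sq_abs (r ω)]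
    have h2 := habound ω
    nlinarith [sq_nonneg (K (r ω)), sq_nonneg (⟪g, e ω⟫ : ℝ), sq_nonneg ‖g‖,
      mul_nonneg (sq_nonneg (⟪g, e ω⟫ : ℝ)) (sq_nonneg (K (r ω)))]
  have int_ξ1sq : Integrable (fun ω => (ξ₁ ω) ^ 2) P := hξ₁_L2.integrable_sq
  have int_ξ2sq : Integrable (fun ω => (ξ₂ ω) ^ 2) P := hξ₂_L2.integrable_sq
  have indepξ1 : IndepFun (fun ω => (ξ₁ ω) ^ 2) (fun ω => (K (r ω)) ^ 2) P :=
    hξ_indep.comp (measurable_fst.pow_const 2) ((hK_meas.comp measurable_snd).pow_const 2)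
  have indepξ2 : IndepFun (fun ω => (ξ₂ ω) ^ 2) (fun ω => (K (r ω)) ^ 2) P :=
    hξ_indep.comp (measurable_snd.pow_const 2) ((hK_meas.comp measurable_snd).pow_const 2)
  have int_ξ1K : Integrable (fun ω => (ξ₁ ω) ^ 2 * (K (r ω)) ^ 2) P :=
    indepξ1.integrable_mul int_ξ1sq hK2_int
  have int_ξ2K : Integrable (fun ω => (ξ₂ ω) ^ 2 * (K (r ω)) ^ 2) P :=
    indepξ2.integrable_mul int_ξ2sq hK2_int
  -- key expectation identities
  have hsphere : ∫ ω, (⟪g, e ω⟫ : ℝ) ^ 2 ∂P = ‖g‖ ^ 2 / d :=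
    sphere_inner_sq P hd e he_meas he_norm he_unif g
  have indep_ar : IndepFun (fun ω => (⟪g, e ω⟫ : ℝ) ^ 2)
      (fun ω => (r ω) ^ 2 * (K (r ω)) ^ 2) P :=
    hindep.comp ((measurable_const.inner measurable_id).pow_const 2)
      ((measurable_id.pow_const 2).mul (hK_meas.pow_const 2))
  have int_a2 : Integrable (fun ω => (⟪g, e ω⟫ : ℝ) ^ 2) P := by
    refine (integrable_const (‖g‖ ^ 2)).mono' ma2.aestronglyMeasurable ?_
    refine Filter.Eventually.of_forall fun ω => ?_
    rw [Real.norm_eq_abs, abs_of_nonneg (sq_nonneg _)]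
    exact habound ω
  have E1 : ∫ ω, (⟪g, e ω⟫ : ℝ) ^ 2 * ((r ω) ^ 2 * (K (r ω)) ^ 2) ∂P
      = (‖g‖ ^ 2 / d) * ∫ ω, (r ω) ^ 2 * (K (r ω)) ^ 2 ∂P := by
    rw [indep_ar.integral_fun_mul_eq_mul_integral int_a2.aestronglyMeasurable intJ.aestronglyMeasurable, hsphere]
  have E2 : ∫ ω, (ξ₁ ω) ^ 2 * (K (r ω)) ^ 2 ∂P = (∫ ω, (ξ₁ ω) ^ 2 ∂P) * κ :=
    indepξ1.integral_fun_mul_eq_mul_integral int_ξ1sq.aestronglyMeasurable hK2_int.aestronglyMeasurable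
  have E3 : ∫ ω, (ξ₂ ω) ^ 2 * (K (r ω)) ^ 2 ∂P = (∫ ω, (ξ₂ ω) ^ 2 ∂P) * κ :=
    indepξ2.integral_fun_mul_eq_mul_integral int_ξ2sq.aestronglyMeasurable hK2_int.aestronglyMeasurable
  -- bounds on the r-moments
  have hJ : ∫ ω, (r ω) ^ 2 * (K (r ω)) ^ 2 ∂P ≤ κ := by
    refine integral_mono_ae intJ hK2_int ?_
    filter_upwards [hr_ae] with ω hω
    have h1 : (r ω) ^ 2 ≤ 1 := by nlinarith [abs_nonneg (r ω), sq_abs (r ω)]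
    nlinarith [sq_nonneg (K (r ω))]
  have hJ4 : ∫ ω, (r ω) ^ 4 * (K (r ω)) ^ 2 ∂P ≤ κ := by
    refine integral_mono_ae intJ4 hK2_int ?_
    filter_upwards [hr_ae] with ω hω
    have h0 : (r ω) ^ 2 ≤ 1 := by nlinarith [abs_nonneg (r ω), sq_abs (r ω)]
    have h1 : (r ω) ^ 4 ≤ 1 := by nlinarith [sq_nonneg (r ω), h0]
    nlinarith [sq_nonneg (K (r ω))]
  -- the dominating integrand
  set H : Ω → ℝ := fun ω =>
    6 * (d:ℝ) ^ 2 * ((⟪g, e ω⟫ : ℝ) ^ 2 * ((r ω) ^ 2 * (K (r ω)) ^ 2)) +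
    3 / 4 * (d:ℝ) ^ 2 * L₂ ^ 2 * γ ^ 2 * ((r ω) ^ 4 * (K (r ω)) ^ 2) +
    (d:ℝ) ^ 2 / γ ^ 2 * ((ξ₁ ω) ^ 2 * (K (r ω)) ^ 2) +
    (d:ℝ) ^ 2 / γ ^ 2 * ((ξ₂ ω) ^ 2 * (K (r ω)) ^ 2) with hHdef
  have ht1 : Integrable
      (fun ω => 6 * (d:ℝ) ^ 2 * ((⟪g, e ω⟫ : ℝ) ^ 2 * ((r ω) ^ 2 * (K (r ω)) ^ 2))) P :=
    int_aJ.const_mul _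
  have ht2 : Integrable
      (fun ω => 3 / 4 * (d:ℝ) ^ 2 * L₂ ^ 2 * γ ^ 2 * ((r ω) ^ 4 * (K (r ω)) ^ 2)) P :=
    intJ4.const_mul _
  have ht3 : Integrable (fun ω => (d:ℝ) ^ 2 / γ ^ 2 * ((ξ₁ ω) ^ 2 * (K (r ω)) ^ 2)) P :=
    int_ξ1K.const_mul _
  have ht4 : Integrable (fun ω => (d:ℝ) ^ 2 / γ ^ 2 * ((ξ₂ ω) ^ 2 * (K (r ω)) ^ 2)) P :=
    int_ξ2K.const_mul _
  have ht12 : Integrable (fun ω =>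
      6 * (d:ℝ) ^ 2 * ((⟪g, e ω⟫ : ℝ) ^ 2 * ((r ω) ^ 2 * (K (r ω)) ^ 2)) +
      3 / 4 * (d:ℝ) ^ 2 * L₂ ^ 2 * γ ^ 2 * ((r ω) ^ 4 * (K (r ω)) ^ 2)) P := ht1.add ht2
  have ht123 : Integrable (fun ω =>
      6 * (d:ℝ) ^ 2 * ((⟪g, e ω⟫ : ℝ) ^ 2 * ((r ω) ^ 2 * (K (r ω)) ^ 2)) +
      3 / 4 * (d:ℝ) ^ 2 * L₂ ^ 2 * γ ^ 2 * ((r ω) ^ 4 * (K (r ω)) ^ 2) +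
      (d:ℝ) ^ 2 / γ ^ 2 * ((ξ₁ ω) ^ 2 * (K (r ω)) ^ 2)) P := ht12.add ht3
  have intH : Integrable H P := ht123.add ht4
  -- the pointwise bound
  have main : ∫ ω, ‖((d : ℝ) / (2 * γ) *
          ((f (x + (γ * r ω) • e ω) + ξ₁ ω)
            - (f (x - (γ * r ω) • e ω) + ξ₂ ω)) * K (r ω)) • e ω‖ ^ 2 ∂P
      ≤ ∫ ω, H ω ∂P := by
    refine integral_mono_of_nonneg (Filter.Eventually.of_forall fun ω => by positivity) intH ?_
    filter_upwards [hr_ae] with ω hω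
    have hnormh : ‖(γ * r ω) • e ω‖ ^ 2 = γ ^ 2 * (r ω) ^ 2 := by
      rw [norm_smul, he_norm ω, mul_one, Real.norm_eq_abs, sq_abs]; ring
    have hinnerh : (⟪g, (γ * r ω) • e ω⟫ : ℝ) = (γ * r ω) * ⟪g, e ω⟫ :=
      real_inner_smul_right _ _ _
    have hd1 := descent_lemma f L₂ hf hlip x ((γ * r ω) • e ω)
    have hd2 := descent_lemma f L₂ hf hlip x (-((γ * r ω) • e ω))
    rw [show x + -((γ * r ω) • e ω) = x - (γ * r ω) • e ω by module,
      inner_neg_right, norm_neg, hinnerh, hnormh] at hd2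
    rw [hinnerh, hnormh] at hd1
    have hF : |(f (x + (γ * r ω) • e ω) - f (x - (γ * r ω) • e ω))
        - 2 * (γ * r ω) * ⟪g, e ω⟫| ≤ L₂ * (γ ^ 2 * (r ω) ^ 2) := by
      have h1 : (f (x + (γ * r ω) • e ω) - f (x - (γ * r ω) • e ω))
          - 2 * (γ * r ω) * ⟪g, e ω⟫ =
          (f (x + (γ * r ω) • e ω) - f x - (γ * r ω) * ⟪g, e ω⟫)
            - (f (x - (γ * r ω) • e ω) - f x - -((γ * r ω) * ⟪g, e ω⟫)) := by ring
      rw [h1]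
      calc |(f (x + (γ * r ω) • e ω) - f x - (γ * r ω) * ⟪g, e ω⟫)
            - (f (x - (γ * r ω) • e ω) - f x - -((γ * r ω) * ⟪g, e ω⟫))|
          ≤ |f (x + (γ * r ω) • e ω) - f x - (γ * r ω) * ⟪g, e ω⟫|
            + |f (x - (γ * r ω) • e ω) - f x - -((γ * r ω) * ⟪g, e ω⟫)| := abs_sub _ _
        _ ≤ L₂ / 2 * (γ ^ 2 * (r ω) ^ 2) + L₂ / 2 * (γ ^ 2 * (r ω) ^ 2) :=
            add_le_add hd1 hd2
        _ = L₂ * (γ ^ 2 * (r ω) ^ 2) := by ring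
    have h1 : ((f (x + (γ * r ω) • e ω) - f (x - (γ * r ω) • e ω))
        - 2 * (γ * (r ω)) * ⟪g, e ω⟫) ^ 2 ≤ (L₂ * (γ ^ 2 * (r ω) ^ 2)) ^ 2 := by
      rw [← sq_abs]
      exact pow_le_pow_left₀ (abs_nonneg _) hF 2
    have halg := pointwise_alg (d:ℝ) γ (K (r ω)) (r ω) (⟪g, e ω⟫ : ℝ)
      (f (x + (γ * r ω) • e ω) - f (x - (γ * r ω) • e ω)) (ξ₁ ω) (ξ₂ ω) L₂ hγ' h1
    have hnrm : ‖((d : ℝ) / (2 * γ) *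
          ((f (x + (γ * r ω) • e ω) + ξ₁ ω)
            - (f (x - (γ * r ω) • e ω) + ξ₂ ω)) * K (r ω)) • e ω‖ ^ 2
        = ((d : ℝ) / (2 * γ) *
            ((f (x + (γ * r ω) • e ω) - f (x - (γ * r ω) • e ω)) + ξ₁ ω - ξ₂ ω)
            * K (r ω)) ^ 2 := by
      rw [norm_smul, he_norm ω, mul_one, Real.norm_eq_abs, sq_abs]
      ring
    show ‖((d : ℝ) / (2 * γ) *
          ((f (x + (γ * r ω) • e ω) + ξ₁ ω)
            - (f (x - (γ * r ω) • e ω) + ξ₂ ω)) * K (r ω)) • e ω‖ ^ 2 ≤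
      6 * (d:ℝ) ^ 2 * ((⟪g, e ω⟫ : ℝ) ^ 2 * ((r ω) ^ 2 * (K (r ω)) ^ 2)) +
      3 / 4 * (d:ℝ) ^ 2 * L₂ ^ 2 * γ ^ 2 * ((r ω) ^ 4 * (K (r ω)) ^ 2) +
      (d:ℝ) ^ 2 / γ ^ 2 * ((ξ₁ ω) ^ 2 * (K (r ω)) ^ 2) +
      (d:ℝ) ^ 2 / γ ^ 2 * ((ξ₂ ω) ^ 2 * (K (r ω)) ^ 2)
    rw [hnrm]
    exact halg
  -- compute the integral of H
  have hHint : ∫ ω, H ω ∂P =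
      6 * (d:ℝ) ^ 2 * ((‖g‖ ^ 2 / d) * ∫ ω, (r ω) ^ 2 * (K (r ω)) ^ 2 ∂P) +
      3 / 4 * (d:ℝ) ^ 2 * L₂ ^ 2 * γ ^ 2 * ∫ ω, (r ω) ^ 4 * (K (r ω)) ^ 2 ∂P +
      (d:ℝ) ^ 2 / γ ^ 2 * ((∫ ω, (ξ₁ ω) ^ 2 ∂P) * κ) +
      (d:ℝ) ^ 2 / γ ^ 2 * ((∫ ω, (ξ₂ ω) ^ 2 ∂P) * κ) := by
    rw [hHdef]
    rw [integral_add ht123 ht4, integral_add ht12 ht3, integral_add ht1 ht2,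
      integral_const_mul, integral_const_mul, integral_const_mul, integral_const_mul,
      E1, E2, E3]
  -- final assembly
  set J : ℝ := ∫ ω, (r ω) ^ 2 * (K (r ω)) ^ 2 ∂P
  set J4 : ℝ := ∫ ω, (r ω) ^ 4 * (K (r ω)) ^ 2 ∂P
  have hJ0 : 0 ≤ J := integral_nonneg fun ω => by positivity
  have hJ40 : 0 ≤ J4 := integral_nonneg fun ω => by positivity
  have hb1 : 6 * (d:ℝ) ^ 2 * ((‖g‖ ^ 2 / d) * J) ≤ 6 * (d:ℝ) * ‖g‖ ^ 2 * κ := by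
    have heq : 6 * (d:ℝ) ^ 2 * ((‖g‖ ^ 2 / d) * J) = (6 * (d:ℝ) * ‖g‖ ^ 2) * J := by
      field_simp
    rw [heq]
    exact mul_le_mul_of_nonneg_left hJ (by positivity)
  have hb2 : 3 / 4 * (d:ℝ) ^ 2 * L₂ ^ 2 * γ ^ 2 * J4 ≤ 3 / 4 * (d:ℝ) ^ 2 * L₂ ^ 2 * γ ^ 2 * κ :=
    mul_le_mul_of_nonneg_left hJ4 (by positivity)
  have hb3 : (d:ℝ) ^ 2 / γ ^ 2 * ((∫ ω, (ξ₁ ω) ^ 2 ∂P) * κ) ≤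
      (d:ℝ) ^ 2 / γ ^ 2 * (Δt ^ 2 * κ) :=
    mul_le_mul_of_nonneg_left (mul_le_mul_of_nonneg_right hξ₁_mom hκ) (by positivity)
  have hb4 : (d:ℝ) ^ 2 / γ ^ 2 * ((∫ ω, (ξ₂ ω) ^ 2 ∂P) * κ) ≤
      (d:ℝ) ^ 2 / γ ^ 2 * (Δt ^ 2 * κ) :=
    mul_le_mul_of_nonneg_left (mul_le_mul_of_nonneg_right hξ₂_mom hκ) (by positivity)
  have hRHS : κ * (6 * d * ‖g‖ ^ 2 + 3 / 4 * (d : ℝ) ^ 2 * L₂ ^ 2 * γ ^ 2)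
        + 2 * κ * (d : ℝ) ^ 2 * Δt ^ 2 / γ ^ 2
      = 6 * (d:ℝ) * ‖g‖ ^ 2 * κ + 3 / 4 * (d:ℝ) ^ 2 * L₂ ^ 2 * γ ^ 2 * κ
        + (d:ℝ) ^ 2 / γ ^ 2 * (Δt ^ 2 * κ) + (d:ℝ) ^ 2 / γ ^ 2 * (Δt ^ 2 * κ) := by
    field_simp; ring
  rw [hHint] at main
  rw [hRHS]
  linarith [main, hb1, hb2, hb3, hb4]
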